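/- For the position-dependent-mass Hamiltonian H = p₁²/(2q₁²) + p₂²q₂⁴/2 + q₁⁴/2 + 2/q₂² on the set q₁, q₂ ≠ 0, the function Θ = −(1/2)·arctan(p₁/q₁³) − (1/2)·arctan(p₂q₂³/2) satisfies {Θ, H} = 0. -/

import Mathlib

/-- Canonical Poisson bracket on ℝ⁴ in coordinates (q₁, q₂, p₁, p₂). -/
noncomputable def poissonBracket (F G : ℝ → ℝ → ℝ → ℝ → ℝ) (q1 q2 p1 p2 : ℝ) : ℝ :=
  deriv (fun x => F x q2 p1 p2) q1 * deriv (fun x => G q1 q2 x p2) p1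
  - deriv (fun x => F q1 q2 x p2) p1 * deriv (fun x => G x q2 p1 p2) q1
  + deriv (fun x => F q1 x p1 p2) q2 * deriv (fun x => G q1 q2 p1 x) p2
  - deriv (fun x => F q1 q2 p1 x) p2 * deriv (fun x => G q1 x p1 p2) q2

/-- For the position-dependent-mass Hamiltonian
H = p₁²/(2q₁²) + p₂²q₂⁴/2 + q₁⁴/2 + 2/q₂², the quantity
Θ = −(1/2)·arctan(p₁/q₁³) − (1/2)·arctan(p₂q₂³/2) is conserved: {Θ, H} = 0. -/
theorem pdm_theta_conserved
    (H Θ : ℝ → ℝ → ℝ → ℝ → ℝ)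
    (hH : H = fun q1 q2 p1 p2 =>
      p1 ^ 2 / (2 * q1 ^ 2) + p2 ^ 2 * q2 ^ 4 / 2 + q1 ^ 4 / 2 + 2 / q2 ^ 2)
    (hΘ : Θ = fun q1 q2 p1 p2 =>
      -(1 / 2) * Real.arctan (p1 / q1 ^ 3) - (1 / 2) * Real.arctan (p2 * q2 ^ 3 / 2)) :
    ∀ q1 q2 p1 p2 : ℝ, q1 ≠ 0 → q2 ≠ 0 →
      poissonBracket Θ H q1 q2 p1 p2 = 0 := by
  subst hH hΘ
  intro q1 q2 p1 p2 hq1 hq2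
  have hq13 : q1 ^ 3 ≠ 0 := pow_ne_zero _ hq1
  have hq12 : (2 : ℝ) * q1 ^ 2 ≠ 0 := mul_ne_zero two_ne_zero (pow_ne_zero _ hq1)
  have hq22 : q2 ^ 2 ≠ 0 := pow_ne_zero _ hq2
  have hA : (0:ℝ) < q1 ^ 6 + p1 ^ 2 := by positivity
  have hB : (0:ℝ) < 4 + p2 ^ 2 * q2 ^ 6 := by positivity
  have harct : ∀ y : ℝ, HasDerivAt Real.arctan (1 / (1 + y ^ 2)) y :=
    fun y => Real.hasDerivAt_arctan y
  -- Θ derivatives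
  have dΘq1 : deriv (fun x => -(1 / 2) * Real.arctan (p1 / x ^ 3)
      - (1 / 2) * Real.arctan (p2 * q2 ^ 3 / 2)) q1
      = (3 / 2) * p1 * q1 ^ 2 / (q1 ^ 6 + p1 ^ 2) := by
    have h1 : HasDerivAt (fun x : ℝ => p1 / x ^ 3)
        ((0 * q1 ^ 3 - p1 * ((3 : ℕ) * q1 ^ 2)) / (q1 ^ 3) ^ 2) q1 :=
      (hasDerivAt_const q1 p1).div (hasDerivAt_pow 3 q1) hq13
    have h2 := (((harct (p1 / q1 ^ 3)).comp q1 h1).const_mul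
      (-(1 / 2) : ℝ)).sub_const ((1 / 2) * Real.arctan (p2 * q2 ^ 3 / 2))
    have hd := h2.deriv
    simp only [Function.comp] at hd
    rw [hd]
    have h3 : (1 : ℝ) + (p1 / q1 ^ 3) ^ 2 ≠ 0 := by positivity
    field_simp
    ring
  have dΘp1 : deriv (fun x => -(1 / 2) * Real.arctan (x / q1 ^ 3)
      - (1 / 2) * Real.arctan (p2 * q2 ^ 3 / 2)) p1
      = -(1 / 2) * q1 ^ 3 / (q1 ^ 6 + p1 ^ 2) := by
    have h1 : HasDerivAt (fun x : ℝ => x / q1 ^ 3) (1 / q1 ^ 3) p1 := by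
      simpa using (hasDerivAt_id p1).div_const (q1 ^ 3)
    have h2 := (((harct (p1 / q1 ^ 3)).comp p1 h1).const_mul
      (-(1 / 2) : ℝ)).sub_const ((1 / 2) * Real.arctan (p2 * q2 ^ 3 / 2))
    have hd := h2.deriv
    simp only [Function.comp] at hd
    rw [hd]
    have h3 : (1 : ℝ) + (p1 / q1 ^ 3) ^ 2 ≠ 0 := by positivity
    field_simp
  have dΘq2 : deriv (fun x => -(1 / 2) * Real.arctan (p1 / q1 ^ 3)
      - (1 / 2) * Real.arctan (p2 * x ^ 3 / 2)) q2
      = -(3 * p2 * q2 ^ 2) / (4 + p2 ^ 2 * q2 ^ 6) := by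
    have h1 : HasDerivAt (fun x : ℝ => p2 * x ^ 3 / 2)
        ((p2 * ((3 : ℕ) * q2 ^ 2)) / 2) q2 :=
      (((hasDerivAt_pow 3 q2)).const_mul p2).div_const 2
    have h2 := (hasDerivAt_const q2 (-(1 / 2) * Real.arctan (p1 / q1 ^ 3))).sub
      (((harct (p2 * q2 ^ 3 / 2)).comp q2 h1).const_mul ((1 / 2) : ℝ))
    have hd := h2.deriv
    simp only [Function.comp] at hd
    refine hd.trans ?_
    have h3 : (1 : ℝ) + (p2 * q2 ^ 3 / 2) ^ 2 ≠ 0 := by positivity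
    field_simp
    ring
  have dΘp2 : deriv (fun x => -(1 / 2) * Real.arctan (p1 / q1 ^ 3)
      - (1 / 2) * Real.arctan (x * q2 ^ 3 / 2)) p2
      = -(q2 ^ 3) / (4 + p2 ^ 2 * q2 ^ 6) := by
    have h1 : HasDerivAt (fun x : ℝ => x * q2 ^ 3 / 2) (q2 ^ 3 / 2) p2 := by
      simpa using ((hasDerivAt_id p2).mul_const (q2 ^ 3)).div_const 2
    have h2 := (hasDerivAt_const p2 (-(1 / 2) * Real.arctan (p1 / q1 ^ 3))).sub
      (((harct (p2 * q2 ^ 3 / 2)).comp p2 h1).const_mul ((1 / 2) : ℝ))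
    have hd := h2.deriv
    simp only [Function.comp] at hd
    refine hd.trans ?_
    have h3 : (1 : ℝ) + (p2 * q2 ^ 3 / 2) ^ 2 ≠ 0 := by positivity
    field_simp
    ring
  -- H derivatives
  have dHq1 : deriv (fun x => p1 ^ 2 / (2 * x ^ 2) + p2 ^ 2 * q2 ^ 4 / 2
      + x ^ 4 / 2 + 2 / q2 ^ 2) q1
      = -(p1 ^ 2) / q1 ^ 3 + 2 * q1 ^ 3 := by
    have h1 : HasDerivAt (fun x : ℝ => p1 ^ 2 / (2 * x ^ 2))
        ((0 * (2 * q1 ^ 2) - p1 ^ 2 * (2 * ((2 : ℕ) * q1 ^ 1))) / (2 * q1 ^ 2) ^ 2) q1 :=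
      (hasDerivAt_const q1 (p1 ^ 2)).div ((hasDerivAt_pow 2 q1).const_mul 2) hq12
    have h2 : HasDerivAt (fun x : ℝ => x ^ 4 / 2) (((4 : ℕ) * q1 ^ 3) / 2) q1 :=
      (hasDerivAt_pow 4 q1).div_const 2
    have h := ((h1.add_const (p2 ^ 2 * q2 ^ 4 / 2)).add h2).add_const (2 / q2 ^ 2)
    refine h.deriv.trans ?_
    field_simp
    ring
  have dHp1 : deriv (fun x => x ^ 2 / (2 * q1 ^ 2) + p2 ^ 2 * q2 ^ 4 / 2
      + q1 ^ 4 / 2 + 2 / q2 ^ 2) p1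
      = p1 / q1 ^ 2 := by
    have h1 : HasDerivAt (fun x : ℝ => x ^ 2 / (2 * q1 ^ 2))
        (((2 : ℕ) * p1 ^ 1) / (2 * q1 ^ 2)) p1 :=
      (hasDerivAt_pow 2 p1).div_const _
    have h := ((h1.add_const (p2 ^ 2 * q2 ^ 4 / 2)).add_const (q1 ^ 4 / 2)).add_const
      (2 / q2 ^ 2)
    rw [h.deriv]
    field_simp
    ring
  have dHq2 : deriv (fun x => p1 ^ 2 / (2 * q1 ^ 2) + p2 ^ 2 * x ^ 4 / 2
      + q1 ^ 4 / 2 + 2 / x ^ 2) q2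
      = 2 * p2 ^ 2 * q2 ^ 3 - 4 / q2 ^ 3 := by
    have h1 : HasDerivAt (fun x : ℝ => p2 ^ 2 * x ^ 4 / 2)
        ((p2 ^ 2 * ((4 : ℕ) * q2 ^ 3)) / 2) q2 :=
      ((hasDerivAt_pow 4 q2).const_mul (p2 ^ 2)).div_const 2
    have h2 : HasDerivAt (fun x : ℝ => 2 / x ^ 2)
        ((0 * q2 ^ 2 - 2 * ((2 : ℕ) * q2 ^ 1)) / (q2 ^ 2) ^ 2) q2 :=
      (hasDerivAt_const q2 (2 : ℝ)).div (hasDerivAt_pow 2 q2) hq22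
    have h := (((hasDerivAt_const q2 (p1 ^ 2 / (2 * q1 ^ 2))).add h1).add_const
      (q1 ^ 4 / 2)).add h2
    refine h.deriv.trans ?_
    field_simp
    ring
  have dHp2 : deriv (fun x => p1 ^ 2 / (2 * q1 ^ 2) + x ^ 2 * q2 ^ 4 / 2
      + q1 ^ 4 / 2 + 2 / q2 ^ 2) p2
      = p2 * q2 ^ 4 := by
    have h1 : HasDerivAt (fun x : ℝ => x ^ 2 * q2 ^ 4 / 2)
        ((((2 : ℕ) * p2 ^ 1) * q2 ^ 4) / 2) p2 :=
      ((hasDerivAt_pow 2 p2).mul_const (q2 ^ 4)).div_const 2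
    have h := (((hasDerivAt_const p2 (p1 ^ 2 / (2 * q1 ^ 2))).add h1).add_const
      (q1 ^ 4 / 2)).add_const (2 / q2 ^ 2)
    refine h.deriv.trans ?_
    push_cast
    ring
  simp only [poissonBracket]
  rw [dΘq1, dΘp1, dΘq2, dΘp2, dHq1, dHp1, dHq2, dHp2]
  field_simp
  ring
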